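/- Let A = F_d* diag(â) F_d be a circular convolution operator on ℓ²(ℤ_d) with kernel a, let λ_1,…,λ_N be the distinct eigenvalues of A, and let P_k be the orthogonal projection onto the eigenspace E_k of diag(â) for λ_k. Let Ω ⊂ ℤ_d, set f_i = F_d e_i, let Y = {e_i, A e_i, …, A^{l_i} e_i : i ∈ Ω}, and let E be the linear span of Y. If for every i ∈ Ω one has A^{l_i+1} e_i ∈ E and for every k the family {P_k f_i : i ∈ Ω} is a frame for E_k, then Y is a frame for ℓ²(ℤ_d). -/

import Mathlib

open Matrix

/-- Unnormalized discrete Fourier transform of `a : ZMod d → ℂ`. -/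
noncomputable def hatKer (d : ℕ) [NeZero d] (a : ZMod d → ℂ) : ZMod d → ℂ :=
  fun j => ∑ k : ZMod d,
    a k * Complex.exp (-(2 * (Real.pi : ℂ) * Complex.I) * ((j.val : ℂ) * (k.val : ℂ)) / (d : ℂ))

/-- The circular convolution operator with kernel `a`, as a matrix. -/
def convMat (d : ℕ) (a : ZMod d → ℂ) : Matrix (ZMod d) (ZMod d) ℂ :=
  Matrix.of fun k i => a (k - i)

/-- The normalized discrete Fourier matrix `F_d`. -/
noncomputable def FdMat (d : ℕ) : Matrix (ZMod d) (ZMod d) ℂ :=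
  Matrix.of fun j k =>
    ((Real.sqrt d : ℝ) : ℂ)⁻¹ *
      Complex.exp (-(2 * (Real.pi : ℂ) * Complex.I) * ((j.val : ℂ) * (k.val : ℂ)) / (d : ℂ))


open Finset

noncomputable def zet (d : ℕ) : ℂ := Complex.exp (-(2 * (Real.pi : ℂ) * Complex.I) / d)

lemma zet_pow (d : ℕ) (m : ℕ) :
    zet d ^ m = Complex.exp (-(2 * (Real.pi : ℂ) * Complex.I) * m / d) := by
  rw [zet, ← Complex.exp_nat_mul]
  ring_nf

lemma zet_pow_d (d : ℕ) [NeZero d] : zet d ^ d = 1 := by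
  rw [zet_pow]
  have hd : (d : ℂ) ≠ 0 := Nat.cast_ne_zero.2 (NeZero.ne d)
  rw [mul_div_assoc, div_self hd, mul_one]
  rw [show -(2 * (Real.pi : ℂ) * Complex.I) = (((-1 : ℤ)) : ℂ) * (2 * Real.pi * Complex.I) by push_cast; ring]
  exact Complex.exp_int_mul_two_pi_mul_I (-1)

lemma zet_pow_mod (d : ℕ) [NeZero d] (m : ℕ) : zet d ^ m = zet d ^ (m % d) := by
  conv_lhs => rw [← Nat.div_add_mod m d, pow_add, pow_mul, zet_pow_d, one_pow, one_mul]

lemma zet_pow_eq_one_iff (d : ℕ) [NeZero d] (m : ℕ) : zet d ^ m = 1 ↔ (d : ℕ) ∣ m := by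
  rw [zet_pow, Complex.exp_eq_one_iff]
  have hd : (d : ℂ) ≠ 0 := Nat.cast_ne_zero.2 (NeZero.ne d)
  have hpi : (2 * (Real.pi : ℂ) * Complex.I) ≠ 0 := by
    simp [Complex.I_ne_zero, Real.pi_ne_zero, Complex.ofReal_ne_zero]
  constructor
  · rintro ⟨n, hn⟩
    field_simp at hn
    have h1 : (2 * (Real.pi : ℂ) * Complex.I) * (-(m:ℂ)) = (2 * (Real.pi : ℂ) * Complex.I) * ((n:ℂ) * d) := by
      rw [hn]
      ring
    have h2 : -(m:ℂ) = (n:ℂ) * d := mul_left_cancel₀ hpi h1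
    have h3 : -(m:ℤ) = n * d := by exact_mod_cast h2
    have h4 : (d:ℤ) ∣ (m:ℤ) := ⟨-n, by linear_combination -h3⟩
    exact_mod_cast h4
  · rintro ⟨k, rfl⟩
    refine ⟨-k, ?_⟩
    push_cast
    field_simp

noncomputable def chi (d : ℕ) [NeZero d] (x : ZMod d) : ℂ := zet d ^ x.val

lemma chi_add (d : ℕ) [NeZero d] (x y : ZMod d) : chi d (x + y) = chi d x * chi d y := by
  rw [chi, chi, chi, ZMod.val_add, ← zet_pow_mod, pow_add]

lemma chi_mul_val (d : ℕ) [NeZero d] (x y : ZMod d) : chi d (x * y) = zet d ^ (x.val * y.val) := by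
  rw [chi, ZMod.val_mul, ← zet_pow_mod]

lemma chi_zero (d : ℕ) [NeZero d] : chi d 0 = 1 := by
  simp [chi, ZMod.val_zero]

lemma chi_ne_zero (d : ℕ) [NeZero d] (x : ZMod d) : chi d x ≠ 0 := by
  rw [chi, zet]
  exact pow_ne_zero _ (Complex.exp_ne_zero _)

lemma chi_neg (d : ℕ) [NeZero d] (x : ZMod d) : chi d (-x) = (chi d x)⁻¹ := by
  have h : chi d (-x) * chi d x = 1 := by rw [← chi_add]; simp [chi_zero]
  field_simp [chi_ne_zero] at h ⊢
  linear_combination h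

lemma conj_chi (d : ℕ) [NeZero d] (x : ZMod d) :
    (starRingEnd ℂ) (chi d x) = chi d (-x) := by
  have hz : (starRingEnd ℂ) (zet d) = (zet d)⁻¹ := by
    rw [zet, ← Complex.exp_conj, ← Complex.exp_neg]
    congr 1
    simp only [map_div₀, map_neg, _root_.map_mul, map_ofNat, Complex.conj_I,
      Complex.conj_ofReal, Complex.conj_natCast]
    ring
  rw [chi_neg]
  unfold chi
  rw [map_pow, hz, inv_pow]

lemma sum_chi (d : ℕ) [NeZero d] (x : ZMod d) :
    ∑ t : ZMod d, chi d (t * x) = if x = 0 then (d : ℂ) else 0 := by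
  by_cases hx : x = 0
  · simp [hx, chi_zero]
  · simp only [hx, if_false]
    have key : ∀ t : ZMod d, chi d (t * x) = (zet d ^ x.val) ^ t.val := by
      intro t
      rw [chi_mul_val, mul_comm, pow_mul]
    simp only [key]
    have hrange : ∑ t : ZMod d, (zet d ^ x.val) ^ t.val
        = ∑ i ∈ Finset.range d, (zet d ^ x.val) ^ i :=
      Finset.sum_nbij' (fun t => t.val) (fun i => ((i : ℕ) : ZMod d))
        (fun t _ => Finset.mem_range.2 (ZMod.val_lt t)) (fun i _ => Finset.mem_univ _)
        (fun t _ => ZMod.natCast_rightInverse t)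
        (fun i hi => ZMod.val_cast_of_lt (Finset.mem_range.1 hi)) (fun t _ => rfl)
    have hne : zet d ^ x.val ≠ 1 := by
      rw [Ne, zet_pow_eq_one_iff]
      intro hdvd
      have : x.val = 0 := Nat.eq_zero_of_dvd_of_lt hdvd (ZMod.val_lt x)
      exact hx (by rwa [← ZMod.val_eq_zero])
    rw [hrange, geom_sum_eq hne, ← pow_mul, mul_comm, pow_mul, zet_pow_d, one_pow]
    simp

lemma exp_eq_chi (d : ℕ) [NeZero d] (j k : ZMod d) :
    Complex.exp (-(2 * (Real.pi : ℂ) * Complex.I) * ((j.val : ℂ) * (k.val : ℂ)) / (d : ℂ))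
      = chi d (j * k) := by
  rw [chi_mul_val, zet_pow]
  push_cast
  ring_nf

lemma FdMat_apply (d : ℕ) [NeZero d] (j k : ZMod d) :
    FdMat d j k = ((Real.sqrt d : ℝ) : ℂ)⁻¹ * chi d (j * k) := by
  rw [FdMat, Matrix.of_apply, exp_eq_chi]

lemma hatKer_eq (d : ℕ) [NeZero d] (a : ZMod d → ℂ) (j : ZMod d) :
    hatKer d a j = ∑ k : ZMod d, a k * chi d (j * k) := by
  unfold hatKer
  simp_rw [exp_eq_chi]

lemma sqrt_sq (d : ℕ) [NeZero d] :
    ((Real.sqrt d : ℝ) : ℂ)⁻¹ * ((Real.sqrt d : ℝ) : ℂ)⁻¹ * d = 1 := by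
  have h : ((Real.sqrt d : ℝ) : ℂ) * ((Real.sqrt d : ℝ) : ℂ) = (d : ℂ) := by
    rw [← Complex.ofReal_mul, Real.mul_self_sqrt (Nat.cast_nonneg d)]
    norm_cast
  have hd : (d : ℂ) ≠ 0 := Nat.cast_ne_zero.2 (NeZero.ne d)
  have hs : ((Real.sqrt d : ℝ) : ℂ) ≠ 0 := fun h0 => hd (by rw [← h, h0, mul_zero])
  field_simp
  linear_combination -h

lemma Fd_unitary (d : ℕ) [NeZero d] : (FdMat d)ᴴ * FdMat d = 1 := by
  ext j k
  rw [Matrix.mul_apply, Matrix.one_apply]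
  simp_rw [Matrix.conjTranspose_apply, FdMat_apply, Complex.star_def, _root_.map_mul,
    Complex.conj_inv, Complex.conj_ofReal, conj_chi]
  have key : ∀ t : ZMod d,
      ((Real.sqrt d : ℝ) : ℂ)⁻¹ * chi d (-(t * j)) * (((Real.sqrt d : ℝ) : ℂ)⁻¹ * chi d (t * k))
        = ((Real.sqrt d : ℝ) : ℂ)⁻¹ * ((Real.sqrt d : ℝ) : ℂ)⁻¹ * chi d (t * (k - j)) := by
    intro t
    have : chi d (-(t * j)) * chi d (t * k) = chi d (t * (k - j)) := by
      rw [← chi_add]; ring_nf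
    rw [← this]; ring
  simp_rw [key]
  rw [← Finset.mul_sum, sum_chi]
  by_cases h : j = k
  · simp [h, sqrt_sq d]
  · have : ¬(k - j = 0) := fun hc => h (by linear_combination -hc)
    simp [this, h]

lemma Fd_mul_conv (d : ℕ) [NeZero d] (a : ZMod d → ℂ) :
    FdMat d * convMat d a = Matrix.diagonal (hatKer d a) * FdMat d := by
  ext j i
  rw [Matrix.mul_apply, Matrix.diagonal_mul]
  have reindex : ∑ k : ZMod d, FdMat d j k * convMat d a k i
      = ∑ s : ZMod d, FdMat d j (s + i) * convMat d a (s + i) i :=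
    (Fintype.sum_equiv (Equiv.addRight i) _ _ (fun s => rfl)).symm
  rw [reindex]
  have key : ∀ s : ZMod d, FdMat d j (s + i) * convMat d a (s + i) i
      = (a s * chi d (j * s)) * (((Real.sqrt d : ℝ) : ℂ)⁻¹ * chi d (j * i)) := by
    intro s
    rw [FdMat_apply, convMat, Matrix.of_apply, add_sub_cancel_right,
      mul_add, chi_add]
    ring
  simp_rw [key]
  rw [← Finset.sum_mul, ← hatKer_eq, FdMat_apply]

lemma aeval_diagonal (d : ℕ) [NeZero d] (b : ZMod d → ℂ) (p : Polynomial ℂ) :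
    Polynomial.aeval (Matrix.diagonal b) p = Matrix.diagonal (fun t => p.eval (b t)) := by
  induction p using Polynomial.induction_on' with
  | add p q hp hq =>
    rw [map_add, hp, hq, Matrix.diagonal_add]
    congr 1
    funext t
    simp
  | monomial n c =>
    rw [Polynomial.aeval_monomial, Matrix.algebraMap_eq_diagonal, Matrix.diagonal_pow,
      Matrix.diagonal_mul_diagonal]
    congr 1
    funext t
    simp [Polynomial.eval_monomial]

lemma mul_aeval (d : ℕ) [NeZero d] (a : ZMod d → ℂ) (p : Polynomial ℂ) :
    FdMat d * Polynomial.aeval (convMat d a) p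
      = Polynomial.aeval (Matrix.diagonal (hatKer d a)) p * FdMat d := by
  have hcomm : ∀ n : ℕ, FdMat d * (convMat d a) ^ n
      = (Matrix.diagonal (hatKer d a)) ^ n * FdMat d := by
    intro n
    induction n with
    | zero => simp
    | succ n ih =>
      rw [pow_succ, pow_succ, ← mul_assoc, ih, mul_assoc, Fd_mul_conv, ← mul_assoc]
  rw [Polynomial.aeval_eq_sum_range (p := p) (convMat d a),
    Polynomial.aeval_eq_sum_range (p := p) (Matrix.diagonal (hatKer d a)),
    Finset.mul_sum, Finset.sum_mul]
  refine Finset.sum_congr rfl fun n _ => ?_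
  rw [mul_smul_comm, smul_mul_assoc, hcomm]


lemma sum_mulVec (d : ℕ) [NeZero d] {ι : Type} (s : Finset ι) (M : ι → Matrix (ZMod d) (ZMod d) ℂ)
    (v : ZMod d → ℂ) : (∑ k ∈ s, M k) *ᵥ v = ∑ k ∈ s, M k *ᵥ v := by
  classical
  induction s using Finset.induction with
  | empty => simp [Matrix.zero_mulVec]
  | insert _ _ h ih => rw [Finset.sum_insert h, Finset.sum_insert h, Matrix.add_mulVec, ih]

/-- if `A^{l_i + 1} e_i` lies in the span `E` of
`Y = {A^n e_i : i ∈ Ω, n ≤ l i}` for every `i ∈ Ω`, and for every eigenvalue `λ` of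
`diag(â)` the projections of the Fourier vectors `f_i = F_d e_i` onto the eigenspace
`E_λ = span{e_t : â t = λ}` span that eigenspace, then `Y` is a frame for `ℓ²(ℤ_d)`. -/
theorem stmt2 (d : ℕ) [NeZero d] (a : ZMod d → ℂ) (Ω : Finset (ZMod d)) (l : ZMod d → ℕ)
    (hE : ∀ i ∈ Ω,
      ((convMat d a) ^ (l i + 1) *ᵥ (Pi.single i 1 : ZMod d → ℂ)) ∈
        Submodule.span ℂ {v : ZMod d → ℂ | ∃ i' ∈ Ω, ∃ n ≤ l i',
          v = (convMat d a) ^ n *ᵥ (Pi.single i' 1 : ZMod d → ℂ)})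
    (hproj : ∀ lam ∈ Set.range (hatKer d a),
      Submodule.span ℂ {v : ZMod d → ℂ | ∃ i ∈ Ω,
          v = Set.indicator {t : ZMod d | hatKer d a t = lam}
                (FdMat d *ᵥ (Pi.single i 1 : ZMod d → ℂ))}
        = Submodule.span ℂ {v : ZMod d → ℂ | ∃ t : ZMod d,
            hatKer d a t = lam ∧ v = (Pi.single t 1 : ZMod d → ℂ)}) :
    Submodule.span ℂ {v : ZMod d → ℂ | ∃ i ∈ Ω, ∃ n ≤ l i,
        v = (convMat d a) ^ n *ᵥ (Pi.single i 1 : ZMod d → ℂ)} = ⊤ := by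
  set E := Submodule.span ℂ {v : ZMod d → ℂ | ∃ i ∈ Ω, ∃ n ≤ l i,
        v = (convMat d a) ^ n *ᵥ (Pi.single i 1 : ZMod d → ℂ)} with hEdef
  have hFF : (FdMat d)ᴴ * FdMat d = 1 := Fd_unitary d
  -- E is invariant under the convolution operator
  have hTE : ∀ v ∈ E, convMat d a *ᵥ v ∈ E := by
    intro v hv
    induction hv using Submodule.span_induction with
    | mem x hx =>
      obtain ⟨i', hi', n, hn, rfl⟩ := hx
      rw [Matrix.mulVec_mulVec, ← pow_succ']
      rcases lt_or_eq_of_le hn with h | h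
      · exact Submodule.subset_span ⟨i', hi', n + 1, h, rfl⟩
      · rw [h]; exact hE i' hi'
    | zero => simp
    | add x y _ _ hx hy => rw [Matrix.mulVec_add]; exact E.add_mem hx hy
    | smul c x _ hx => rw [Matrix.mulVec_smul]; exact E.smul_mem c hx
  -- all powers applied to e_i are in E
  have hTn : ∀ n : ℕ, ∀ i ∈ Ω, (convMat d a) ^ n *ᵥ (Pi.single i 1 : ZMod d → ℂ) ∈ E := by
    intro n
    induction n with
    | zero => intro i hi; exact Submodule.subset_span ⟨i, hi, 0, Nat.zero_le _, rfl⟩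
    | succ n ih =>
      intro i hi
      by_cases h : n + 1 ≤ l i
      · exact Submodule.subset_span ⟨i, hi, n + 1, h, rfl⟩
      · rw [pow_succ', ← Matrix.mulVec_mulVec]
        exact hTE _ (ih i hi)
  -- polynomials in T applied to e_i are in E
  have hpoly : ∀ p : Polynomial ℂ, ∀ i ∈ Ω,
      (Polynomial.aeval (convMat d a) p) *ᵥ (Pi.single i 1 : ZMod d → ℂ) ∈ E := by
    intro p i hi
    rw [Polynomial.aeval_eq_sum_range, sum_mulVec]
    refine Submodule.sum_mem E fun k _ => ?_
    rw [Matrix.smul_mulVec]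
    exact E.smul_mem _ (hTn k i hi)
  -- Fᴴ of the indicator vectors lies in E
  have hind : ∀ i ∈ Ω, ∀ t0 : ZMod d,
      (FdMat d)ᴴ *ᵥ (Set.indicator {t : ZMod d | hatKer d a t = hatKer d a t0}
        (FdMat d *ᵥ (Pi.single i 1 : ZMod d → ℂ))) ∈ E := by
    intro i hi t0
    classical
    set s : Finset ℂ := Finset.univ.image (hatKer d a) with hs
    have hmem : hatKer d a t0 ∈ s := Finset.mem_image_of_mem _ (Finset.mem_univ t0)
    set q : Polynomial ℂ := Lagrange.basis s id (hatKer d a t0) with hq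
    have heval : ∀ t : ZMod d,
        q.eval (hatKer d a t) = if hatKer d a t = hatKer d a t0 then 1 else 0 := by
      intro t
      by_cases h : hatKer d a t = hatKer d a t0
      · rw [h, if_pos rfl]
        exact Lagrange.eval_basis_self (Set.injOn_id _) hmem
      · rw [if_neg h]
        exact Lagrange.eval_basis_of_ne (v := id) (fun hc => h hc.symm)
          (Finset.mem_image_of_mem _ (Finset.mem_univ t))
    have hindic : Set.indicator {t : ZMod d | hatKer d a t = hatKer d a t0}
          (FdMat d *ᵥ (Pi.single i 1 : ZMod d → ℂ))
        = Matrix.diagonal (fun t => q.eval (hatKer d a t)) *ᵥ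
            (FdMat d *ᵥ (Pi.single i 1 : ZMod d → ℂ)) := by
      funext t
      rw [Matrix.mulVec_diagonal, heval, Set.indicator_apply]
      by_cases h : hatKer d a t = hatKer d a t0
      · simp [h]
      · simp [h]
    rw [hindic, Matrix.mulVec_mulVec, Matrix.mulVec_mulVec, ← aeval_diagonal,
      mul_assoc, ← mul_aeval, ← mul_assoc, hFF, one_mul]
    exact hpoly q i hi
  -- hence Fᴴ e_t ∈ E for every t
  have hFe : ∀ t : ZMod d, (FdMat d)ᴴ *ᵥ (Pi.single t 1 : ZMod d → ℂ) ∈ E := by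
    intro t
    have h1 := hproj (hatKer d a t) ⟨t, rfl⟩
    have h2 : Submodule.span ℂ {v : ZMod d → ℂ | ∃ t' : ZMod d,
        hatKer d a t' = hatKer d a t ∧ v = (Pi.single t' 1 : ZMod d → ℂ)}
        ≤ Submodule.comap (Matrix.mulVecLin (FdMat d)ᴴ) E := by
      rw [← h1, Submodule.span_le]
      rintro v ⟨i, hi, rfl⟩
      exact hind i hi t
    exact h2 (Submodule.subset_span ⟨t, rfl, rfl⟩)
  -- conclude
  rw [eq_top_iff]
  intro v _
  have hv : v = (FdMat d)ᴴ *ᵥ (FdMat d *ᵥ v) := by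
    rw [Matrix.mulVec_mulVec, hFF, Matrix.one_mulVec]
  have hexp : (FdMat d)ᴴ *ᵥ (FdMat d *ᵥ v) = ∑ t : ZMod d, (FdMat d *ᵥ v) t •
      ((FdMat d)ᴴ *ᵥ (Pi.single t 1 : ZMod d → ℂ)) := by
    conv_lhs => rw [show FdMat d *ᵥ v
        = ∑ t : ZMod d, (FdMat d *ᵥ v) t • (Pi.single t 1 : ZMod d → ℂ) by
      simp [← Pi.single_smul, smul_eq_mul, mul_one, Finset.univ_sum_single]]
    rw [← Matrix.mulVecLin_apply, map_sum]
    simp [Matrix.mulVecLin_apply]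
  rw [hv, hexp]
  exact Submodule.sum_mem E fun t _ => E.smul_mem _ (hFe t)
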